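/- Let m ≥ 1 and let μ_k^{(1)}, μ_k^{(2)}, α_k ∈ ℂ for k = 1,…,m, and set M_k = [[μ_k^{(1)}, α_k],[0, μ_k^{(2)}]]. Then the matrices M_1,…,M_m are simultaneously diagonalizable (i.e., there exists a single invertible 2×2 complex matrix C such that C^{-1} M_k C is diagonal for every k) if and only if the vector (α_1,…,α_m) ∈ ℂ^m is a scalar multiple of the vector (μ_1^{(1)} − μ_1^{(2)},…,μ_m^{(1)} − μ_m^{(2)}). -/
import Mathlib


/-- Upper triangular `2×2` matrices `M_k` are simultaneously
diagonalizable iff `(α_1,…,α_m)` is a scalar multiple of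
`(μ_1^{(1)}−μ_1^{(2)},…,μ_m^{(1)}−μ_m^{(2)})`. -/
theorem stmt1 (m : ℕ) (hm : 1 ≤ m) (μ₁ μ₂ α : Fin m → ℂ)
    (M : Fin m → Matrix (Fin 2) (Fin 2) ℂ)
    (hM : ∀ k, M k = !![μ₁ k, α k; 0, μ₂ k]) :
    (∃ C : Matrix (Fin 2) (Fin 2) ℂ, IsUnit C ∧ ∀ k, (C⁻¹ * M k * C).IsDiag) ↔
      ∃ c : ℂ, ∀ k, α k = c * (μ₁ k - μ₂ k) := by
  constructor
  · rintro ⟨C, hC, hdiag⟩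
    have hdet : IsUnit C.det := (Matrix.isUnit_iff_isUnit_det C).mp hC
    have hdet0 : C.det ≠ 0 := hdet.ne_zero
    have hMC : ∀ k, ∃ D : Matrix (Fin 2) (Fin 2) ℂ,
        M k * C = C * D ∧ D 1 0 = 0 ∧ D 0 1 = 0 := by
      intro k
      refine ⟨C⁻¹ * M k * C, ?_, hdiag k (by decide), hdiag k (by decide)⟩
      rw [← Matrix.mul_assoc, ← Matrix.mul_assoc, Matrix.mul_nonsing_inv _ hdet,
        Matrix.one_mul]
    have hj : C 1 0 ≠ 0 ∨ C 1 1 ≠ 0 := by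
      by_contra h
      push_neg at h
      apply hdet0
      rw [Matrix.det_fin_two, h.1, h.2]; ring
    rcases hj with hj | hj
    · refine ⟨-(C 0 0 / C 1 0), fun k => ?_⟩
      obtain ⟨D, hMk, hD10, hD01⟩ := hMC k
      have h1 := congrFun (congrFun hMk 1) 0
      have h0 := congrFun (congrFun hMk 0) 0
      rw [hM] at h1 h0
      simp [Matrix.mul_apply, Fin.sum_univ_two, hD10] at h1 h0
      have hD00 : μ₂ k = D 0 0 := mul_left_cancel₀ hj (by linear_combination h1)
      field_simp
      linear_combination h0 - C 0 0 * hD00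
    · refine ⟨-(C 0 1 / C 1 1), fun k => ?_⟩
      obtain ⟨D, hMk, hD10, hD01⟩ := hMC k
      have h1 := congrFun (congrFun hMk 1) 1
      have h0 := congrFun (congrFun hMk 0) 1
      rw [hM] at h1 h0
      simp [Matrix.mul_apply, Fin.sum_univ_two, hD01] at h1 h0
      have hD11 : μ₂ k = D 1 1 := mul_left_cancel₀ hj (by linear_combination h1)
      field_simp
      linear_combination h0 - C 0 1 * hD11
  · rintro ⟨c, hc⟩
    refine ⟨!![1, -c; 0, 1], ?_, ?_⟩
    · rw [Matrix.isUnit_iff_isUnit_det, Matrix.det_fin_two_of]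
      simp
    · have hinv : (!![1, -c; 0, 1] : Matrix (Fin 2) (Fin 2) ℂ)⁻¹ = !![1, c; 0, 1] := by
        apply Matrix.inv_eq_right_inv
        simp [Matrix.mul_fin_two, ← Matrix.one_fin_two]
      intro k i j hij
      rw [hinv, hM k]
      fin_cases i <;> fin_cases j <;> simp_all [Matrix.mul_apply, Fin.sum_univ_two] <;> ring_nf
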